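/- Let M be a compact metric space, f: M → M a continuous map, μ a Borel probability measure on M, and x ∈ B(μ). If C ⊆ M is a closed set with μ(C) > 0, then liminf_{n→∞} dist(f^n(x), C) = 0; that is, there is a strictly increasing sequence n_k such that the distance from f^{n_k}(x) to C converges to 0. -/

import Mathlib

open MeasureTheory Filter Topology

def basin {M : Type*} [TopologicalSpace M] [MeasurableSpace M]
    (f : M → M) (μ : Measure M) : Set M :=
  {z | ∀ φ : C(M, ℝ),
    Tendsto (fun n : ℕ => (n : ℝ)⁻¹ * ∑ k ∈ Finset.range n, φ (f^[k] z))
      atTop (𝓝 (∫ x, φ x ∂μ))}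

/-- a basin point accumulates on every closed set of positive measure. -/
theorem liminf_dist_eq_zero {M : Type*} [MetricSpace M] [CompactSpace M]
    [MeasurableSpace M] [BorelSpace M] (f : M → M) (hf : Continuous f)
    (μ : Measure M) [IsProbabilityMeasure μ] (x : M) (hx : x ∈ basin f μ)
    (C : Set M) (hC : IsClosed C) (hμC : 0 < μ C) :
    atTop.liminf (fun n : ℕ => Metric.infDist (f^[n] x) C) = 0 ∧
    ∃ n : ℕ → ℕ, StrictMono n ∧
      Tendsto (fun j => Metric.infDist (f^[n j] x) C) atTop (𝓝 0) := by
  obtain ⟨c, hc⟩ : C.Nonempty := nonempty_of_measure_ne_zero hμC.ne'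
  have hnonneg : ∀ n, 0 ≤ Metric.infDist (f^[n] x) C := fun n => Metric.infDist_nonneg
  have hbound : ∀ n, Metric.infDist (f^[n] x) C ≤ Metric.diam (Set.univ : Set M) := fun n =>
    le_trans (Metric.infDist_le_dist_of_mem hc)
      (Metric.dist_le_diam_of_mem isCompact_univ.isBounded (Set.mem_univ _) (Set.mem_univ _))
  have key : ∀ ε : ℝ, 0 < ε → ∃ᶠ n in atTop, Metric.infDist (f^[n] x) C < ε := by
    intro ε hε
    by_contra h
    rw [Filter.not_frequently] at h
    obtain ⟨N, hN⟩ := Filter.eventually_atTop.1 h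
    set φ : C(M, ℝ) := ⟨fun y => max 0 (1 - Metric.infDist y C / ε),
      continuous_const.max (continuous_const.sub
        ((Metric.continuous_infDist_pt C).div_const ε))⟩ with hφdef
    have hφ0 : ∀ y, ε ≤ Metric.infDist y C → φ y = 0 := by
      intro y hy
      simp only [hφdef, ContinuousMap.coe_mk]
      apply max_eq_left
      rw [sub_nonpos, le_div_iff₀ hε]
      linarith
    have hsum : ∀ n, N ≤ n →
        ∑ k ∈ Finset.range n, φ (f^[k] x) = ∑ k ∈ Finset.range N, φ (f^[k] x) := by
      intro n hn
      refine (Finset.sum_subset (Finset.range_subset_range.2 hn) ?_).symm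
      intro k hk hk'
      simp only [Finset.mem_range, not_lt] at hk'
      exact hφ0 _ (not_lt.1 (hN k hk'))
    have h0 : Tendsto (fun n : ℕ => (n : ℝ)⁻¹ * ∑ k ∈ Finset.range n, φ (f^[k] x))
        atTop (𝓝 0) := by
      have h1 : Tendsto (fun n : ℕ => (n : ℝ)⁻¹ * ∑ k ∈ Finset.range N, φ (f^[k] x))
          atTop (𝓝 0) := by
        simpa using (tendsto_inv_atTop_nhds_zero_nat (𝕜 := ℝ)).mul_const
          (∑ k ∈ Finset.range N, φ (f^[k] x))
      refine h1.congr' ?_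
      filter_upwards [Filter.eventually_ge_atTop N] with n hn
      rw [hsum n hn]
    have hInt : Integrable (⇑φ) μ := φ.continuous.integrable_of_hasCompactSupport (HasCompactSupport.of_compactSpace _)
    have hφnn : 0 ≤ᵐ[μ] ⇑φ := Filter.Eventually.of_forall fun y => le_max_left _ _
    have hlow : (μ C).toReal ≤ ∫ y, φ y ∂μ := by
      calc (μ C).toReal = ∫ _y in C, (1 : ℝ) ∂μ := by simp; rfl
        _ = ∫ y in C, φ y ∂μ := by
            refine setIntegral_congr_fun hC.measurableSet fun y hy => ?_
            simp [hφdef, Metric.infDist_zero_of_mem hy]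
        _ ≤ ∫ y, φ y ∂μ := setIntegral_le_integral hInt hφnn
    have hzero : (∫ y, φ y ∂μ) = 0 := tendsto_nhds_unique (hx φ) h0
    have hpos : 0 < (μ C).toReal := ENNReal.toReal_pos hμC.ne' (measure_ne_top μ C)
    linarith
  have hfreq : ∀ j : ℕ, ∃ᶠ k in atTop, Metric.infDist (f^[k] x) C < 1 / (j + 1 : ℝ) :=
    fun j => key _ (by positivity)
  obtain ⟨n, hmono, hn⟩ := Filter.extraction_forall_of_frequently hfreq
  refine ⟨?_, n, hmono, squeeze_zero (fun j => hnonneg _) (fun j => (hn j).le)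
    tendsto_one_div_add_atTop_nhds_zero_nat⟩
  have hbdd : Filter.IsBoundedUnder (· ≥ ·) atTop
      (fun n : ℕ => Metric.infDist (f^[n] x) C) :=
    ⟨0, Filter.eventually_map.2 (Filter.Eventually.of_forall hnonneg)⟩
  have hcobdd : Filter.IsCoboundedUnder (· ≥ ·) atTop
      (fun n : ℕ => Metric.infDist (f^[n] x) C) :=
    Filter.IsBoundedUnder.isCoboundedUnder_ge
      ⟨Metric.diam (Set.univ : Set M), Filter.eventually_map.2 (Filter.Eventually.of_forall hbound)⟩
  refine le_antisymm ?_ (Filter.le_liminf_of_le hcobdd (Filter.Eventually.of_forall hnonneg))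
  refine le_of_forall_pos_le_add fun ε hε => ?_
  have := Filter.liminf_le_of_frequently_le ((key ε hε).mono fun n h => h.le) hbdd
  linarith
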